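/- Let t > 1 be a real number, and let 𝒫 be a set of primes satisfying ∑_{p∈𝒫} p^{−t} ≤ 1 + (1 − ∑_{p∈𝒫} p^{−2t})^{1/2}. Then for every natural number k ≥ 1, the set ℕ_k(𝒫) is t-best among primitive subsets of ℕ_{≥k}(𝒫): for every primitive set 𝒮 ⊆ ℕ_{≥k}(𝒫), ∑_{n∈𝒮} n^{−t} ≤ ∑_{n∈ℕ_k(𝒫)} n^{−t}. -/

import Mathlib

/-- A nonempty set of natural numbers is *primitive* if no element of the set divides
another element of the set; the singleton set `{1}` is not considered primitive. -/
def Primitive (S : Set ℕ) : Prop :=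
  S.Nonempty ∧ S ≠ {1} ∧ ∀ a ∈ S, ∀ b ∈ S, a ∣ b → a = b

/-- `NSet P` is the set `ℕ(P)` of natural numbers all of whose prime factors lie in `P`
(the multiplicative semigroup generated by `P`, which contains `1`). -/
def NSet (P : Set ℕ) : Set ℕ :=
  {n : ℕ | 0 < n ∧ ∀ p : ℕ, p.Prime → p ∣ n → p ∈ P}

/-- `NkSet P k = ℕ_k(P)`: the elements of `ℕ(P)` with exactly `k` prime factors
counted with multiplicity. -/
def NkSet (P : Set ℕ) (k : ℕ) : Set ℕ :=
  {n ∈ NSet P | n.primeFactorsList.length = k}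

/-- `NgeSet P k = ℕ_{≥k}(P)`: the elements of `ℕ(P)` with at least `k` prime factors
counted with multiplicity. -/
def NgeSet (P : Set ℕ) (k : ℕ) : Set ℕ :=
  {n ∈ NSet P | k ≤ n.primeFactorsList.length}

namespace BM
open Finset

section Seq
variable {x : ℝ} {g : ℕ → ℝ}

/-- one-step ratio monotonicity for positive log-concave sequences -/
lemma R1 (hg : ∀ j, 0 < g j) (hlc : ∀ j, g j * g (j + 2) ≤ g (j + 1) ^ 2) :
    ∀ i j : ℕ, i ≤ j → g (j + 1) * g i ≤ g j * g (i + 1) := by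
  have key : ∀ d i : ℕ, g (i + d + 1) * g i ≤ g (i + d) * g (i + 1) := by
    intro d
    induction d with
    | zero => intro i; simp [mul_comm]
    | succ d ih =>
      intro i
      have A := ih i
      have B := hlc (i + d)
      have p0 := hg i
      have p1 := hg (i + 1)
      have p2 := hg (i + d)
      have p3 := hg (i + d + 1)
      have e2 : i + (d + 1) = i + d + 1 := by ring
      rw [e2]
      nlinarith [mul_le_mul_of_nonneg_right B p0.le, mul_le_mul_of_nonneg_left A p3.le]
  intro i j hij
  obtain ⟨d, rfl⟩ := Nat.exists_eq_add_of_le hij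
  exact key d i

/-- generalized ratio lemma -/
lemma GRL (hg : ∀ j, 0 < g j) (hlc : ∀ j, g j * g (j + 2) ≤ g (j + 1) ^ 2) :
    ∀ (s i j : ℕ), i ≤ j → g (j + s) * g i ≤ g j * g (i + s) := by
  intro s
  induction s with
  | zero => intro i j _; simp [mul_comm]
  | succ s ih =>
    intro i j hij
    have A := R1 hg hlc (i + s) (j + s) (by omega)
    have B := ih i j hij
    have p1 := hg (i + s)
    have p2 := hg (i + s + 1)
    have p3 := hg i
    have p6 := hg j
    have e1 : j + (s + 1) = j + s + 1 := by ring
    have e2 : i + (s + 1) = i + s + 1 := by ring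
    rw [e1, e2]
    nlinarith [mul_le_mul_of_nonneg_right A p3.le, mul_le_mul_of_nonneg_left B p2.le]

/-- partial sums of the geometric convolution -/
def M (x : ℝ) (g : ℕ → ℝ) (c n : ℕ) : ℝ := ∑ a ∈ range (c + 1), x ^ a * g (n - a)

/-- the convolution sequence -/
def hs (x : ℝ) (g : ℕ → ℝ) (n : ℕ) : ℝ := M x g n n

lemma M_zero (n : ℕ) : M x g 0 n = g n := by simp [M]

lemma M_succ_c (c n : ℕ) : M x g (c + 1) n = M x g c n + x ^ (c + 1) * g (n - (c + 1)) :=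
  Finset.sum_range_succ _ _

lemma M_succ_n (c n : ℕ) : M x g (c + 1) (n + 1) = g (n + 1) + x * M x g c n := by
  rw [M, Finset.sum_range_succ' (fun a => x ^ a * g (n + 1 - a)) (c + 1)]
  simp only [pow_zero, one_mul, Nat.sub_zero, Nat.succ_sub_succ]
  rw [M, Finset.mul_sum, add_comm]
  congr 1
  refine Finset.sum_congr rfl fun a _ => by ring

lemma hs_succ (n : ℕ) : hs x g (n + 1) = g (n + 1) + x * hs x g n := M_succ_n n n

lemma M_nonneg (hx : 0 < x) (hg : ∀ j, 0 < g j) (c n : ℕ) : 0 ≤ M x g c n :=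
  Finset.sum_nonneg fun a _ => mul_nonneg (pow_nonneg hx.le _) (hg _).le

lemma hs_pos (hx : 0 < x) (hg : ∀ j, 0 < g j) (n : ℕ) : 0 < hs x g n := by
  rw [hs, M]
  refine Finset.sum_pos (fun a _ => mul_pos (pow_pos hx _) (hg _)) ⟨0, by simp⟩

lemma M_le_hs (hx : 0 < x) (hg : ∀ j, 0 < g j) {c n : ℕ} (hcn : c ≤ n) :
    M x g c n ≤ hs x g n :=
  Finset.sum_le_sum_of_subset_of_nonneg
    (Finset.range_subset_range.2 (by omega)) fun a _ _ =>
      mul_nonneg (pow_nonneg hx.le _) (hg _).le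

/-- tail estimate -/
lemma TL (hx : 0 < x) (hg : ∀ j, 0 < g j) (hlc : ∀ j, g j * g (j + 2) ≤ g (j + 1) ^ 2)
    {c n : ℕ} (hcn : c ≤ n) :
    g (n + 1) * (hs x g n - M x g c n) ≤ x ^ (c + 1) * g (n - c) * hs x g n := by
  have hsplit : hs x g n = M x g c n + ∑ a ∈ Finset.Ico (c + 1) (n + 1), x ^ a * g (n - a) := by
    rw [hs, M, M]
    simp only [Finset.range_eq_Ico]
    exact (Finset.sum_Ico_consecutive _ (by omega : 0 ≤ c + 1) (by omega : c + 1 ≤ n + 1)).symm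
  have hT : hs x g n - M x g c n = ∑ a ∈ Finset.Ico (c + 1) (n + 1), x ^ a * g (n - a) := by
    rw [hsplit]; ring
  rw [hT, Finset.mul_sum, Finset.sum_Ico_eq_sum_range]
  rw [show n + 1 - (c + 1) = n - c from by omega]
  have step : ∀ b ∈ range (n - c),
      g (n + 1) * (x ^ (c + 1 + b) * g (n - (c + 1 + b)))
        ≤ x ^ (c + 1) * g (n - c) * (x ^ b * g (n - b)) := by
    intro b hb
    have hb' : b < n - c := Finset.mem_range.1 hb
    have G := GRL hg hlc (b + 1) (n - (c + 1 + b)) (n - b) (by omega)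
    rw [show n - b + (b + 1) = n + 1 from by omega,
        show n - (c + 1 + b) + (b + 1) = n - c from by omega] at G
    have hxp : (0:ℝ) ≤ x ^ (c + 1 + b) := pow_nonneg hx.le _
    calc g (n + 1) * (x ^ (c + 1 + b) * g (n - (c + 1 + b)))
        = x ^ (c + 1 + b) * (g (n + 1) * g (n - (c + 1 + b))) := by ring
      _ ≤ x ^ (c + 1 + b) * (g (n - b) * g (n - c)) := by
          exact mul_le_mul_of_nonneg_left G hxp
      _ = x ^ (c + 1) * g (n - c) * (x ^ b * g (n - b)) := by
          rw [pow_add]; ring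
  calc (∑ b ∈ range (n - c), g (n + 1) * (x ^ (c + 1 + b) * g (n - (c + 1 + b))))
      ≤ ∑ b ∈ range (n - c), x ^ (c + 1) * g (n - c) * (x ^ b * g (n - b)) :=
        Finset.sum_le_sum step
    _ = x ^ (c + 1) * g (n - c) * ∑ b ∈ range (n - c), x ^ b * g (n - b) := by
        rw [Finset.mul_sum]
    _ ≤ x ^ (c + 1) * g (n - c) * hs x g n := by
        refine mul_le_mul_of_nonneg_left ?_ (mul_nonneg (pow_nonneg hx.le _) (hg _).le)
        exact Finset.sum_le_sum_of_subset_of_nonneg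
          (Finset.range_subset_range.2 (by omega)) fun a _ _ =>
            mul_nonneg (pow_nonneg hx.le _) (hg _).le

end Seq

section Key
variable {x : ℝ} {g : ℕ → ℝ}

/-- the flow excess function -/
def sfun (x : ℝ) (g : ℕ → ℝ) (n a : ℕ) : ℝ :=
  M x g a n * hs x g (n + 1) - M x g a (n + 1) * hs x g n

lemma sfun_zero (n : ℕ) :
    sfun x g n 0 = g n * hs x g (n + 1) - g (n + 1) * hs x g n := by
  rw [sfun, M_zero, M_zero]

lemma sfun_diff {n a : ℕ} (h : a + 1 ≤ n) :
    sfun x g n (a + 1) = sfun x g n a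
      + x ^ (a + 1) * (g (n - (a + 1)) * hs x g (n + 1) - g (n - a) * hs x g n) := by
  rw [sfun, sfun, M_succ_c, M_succ_c]
  rw [show n + 1 - (a + 1) = n - a from by omega]
  ring

lemma sfun_n (n : ℕ) : sfun x g n n = x ^ (n + 1) * g 0 * hs x g n := by
  have e1 : M x g n (n + 1) = hs x g (n + 1) - x ^ (n + 1) * g 0 := by
    have h := M_succ_c (x := x) (g := g) n (n + 1)
    rw [show (n + 1) - (n + 1) = 0 from by omega] at h
    have h2 : hs x g (n + 1) = M x g (n + 1) (n + 1) := rfl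
    rw [h2, h]; ring
  have e2 : M x g n n = hs x g n := rfl
  rw [sfun, e1, e2]; ring

lemma sfun_nonneg (hx : 0 < x) (hg : ∀ j, 0 < g j)
    (hlc : ∀ j, g j * g (j + 2) ≤ g (j + 1) ^ 2) {n a : ℕ} (ha : a ≤ n) :
    0 ≤ sfun x g n a := by
  rcases a with _ | c
  · rw [sfun_zero]
    have T := TL hx hg hlc (Nat.zero_le n)
    rw [M_zero] at T
    simp only [Nat.sub_zero, pow_one, zero_add] at T
    have e3 := hs_succ (x := x) (g := g) n
    nlinarith [hg n, hg (n + 1), hs_pos hx hg n]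
  · have hc : c + 1 ≤ n := ha
    have T := TL hx hg hlc hc
    have e1 := M_succ_n (x := x) (g := g) c n
    have e2 := M_succ_c (x := x) (g := g) c n
    have e3 := hs_succ (x := x) (g := g) n
    rw [show x ^ (c + 1 + 1) = x ^ (c + 1) * x from pow_succ x (c + 1)] at T
    rw [e2] at T
    rw [sfun, e1, e2, e3]
    nlinarith [T]

lemma sfun_le (hx : 0 < x) (hg : ∀ j, 0 < g j) {n a : ℕ} (ha : a ≤ n) :
    sfun x g n a ≤ x ^ a * g (n - a) * hs x g (n + 1) := by
  rcases a with _ | c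
  · rw [sfun_zero]
    simp only [Nat.sub_zero, pow_zero, one_mul]
    nlinarith [hg (n + 1), hs_pos hx hg n]
  · have hc : c ≤ n := by omega
    have e1 := M_succ_n (x := x) (g := g) c n
    have e2 := M_succ_c (x := x) (g := g) c n
    have e3 := hs_succ (x := x) (g := g) n
    have hM := M_le_hs hx hg hc
    rw [sfun, e1, e2, e3]
    nlinarith [mul_le_mul_of_nonneg_right hM (hg (n + 1)).le]

/-- The key one-level flow inequality. -/
lemma KeyStep (hx : 0 < x) (hg : ∀ j, 0 < g j)
    (hlc : ∀ j, g j * g (j + 2) ≤ g (j + 1) ^ 2)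
    (n : ℕ) (e d D : ℕ → ℝ)
    (he : ∀ a, 0 ≤ e a) (hd : ∀ a, 0 ≤ d a)
    (hed : ∀ a, a ≤ n → e a * g (n - a) ≤ d a * g (n - a + 1))
    (hD1 : ∀ a, a ≤ n → e (a + 1) ≤ D a) (hD2 : ∀ a, a ≤ n → d a ≤ D a) :
    (∑ a ∈ range (n + 2), x ^ a * e a) * hs x g n
      ≤ (∑ a ∈ range (n + 1), x ^ a * D a) * hs x g (n + 1) := by
  have hp1 : 0 < hs x g n := hs_pos hx hg n
  have hp2 : 0 < hs x g (n + 1) := hs_pos hx hg (n + 1)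
  -- coefficient functions
  set c1 : ℕ → ℝ := fun a => sfun x g n a / g (n - a) with hc1def
  set r : ℕ → ℝ := fun a =>
    (x ^ a * g (n - a) * hs x g (n + 1) - sfun x g n a) / g (n - a + 1) with hrdef
  -- the three coefficient identities
  have c0 : r 0 = hs x g n := by
    simp only [hrdef]
    rw [sfun_zero]
    simp only [Nat.sub_zero, pow_zero, one_mul]
    rw [show g n * hs x g (n + 1) - (g n * hs x g (n + 1) - g (n + 1) * hs x g n)
        = g (n + 1) * hs x g n from by ring]
    exact mul_div_cancel_left₀ _ (hg (n + 1)).ne'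
  have cm : ∀ a, a < n → c1 a + r (a + 1) = x ^ (a + 1) * hs x g n := by
    intro a han
    simp only [hc1def, hrdef]
    rw [show n - (a + 1) + 1 = n - a from by omega]
    rw [← add_div, sfun_diff (by omega : a + 1 ≤ n)]
    rw [show sfun x g n a + (x ^ (a + 1) * g (n - (a + 1)) * hs x g (n + 1)
          - (sfun x g n a + x ^ (a + 1) * (g (n - (a + 1)) * hs x g (n + 1)
              - g (n - a) * hs x g n)))
        = g (n - a) * (x ^ (a + 1) * hs x g n) from by ring]
    exact mul_div_cancel_left₀ _ (hg (n - a)).ne'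
  have cn : c1 n = x ^ (n + 1) * hs x g n := by
    simp only [hc1def]
    rw [sfun_n, Nat.sub_self]
    rw [show x ^ (n + 1) * g 0 * hs x g n = g 0 * (x ^ (n + 1) * hs x g n) from by ring]
    exact mul_div_cancel_left₀ _ (hg 0).ne'
  -- Step 1 : rewrite the left side
  rw [show n + 2 = n + 1 + 1 from rfl]
  rw [Finset.sum_mul, Finset.sum_range_succ' (fun a => x ^ a * e a * hs x g n) (n + 1)]
  rw [Finset.sum_range_succ (fun a => x ^ (a + 1) * e (a + 1) * hs x g n) n]
  have hsum : (∑ a ∈ range n, x ^ (a + 1) * e (a + 1) * hs x g n)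
      = ∑ a ∈ range n, (e (a + 1) * c1 a + e (a + 1) * r (a + 1)) := by
    refine Finset.sum_congr rfl fun a ha => ?_
    rw [← mul_add, cm a (Finset.mem_range.1 ha)]
    ring
  have step1 : (∑ a ∈ range n, x ^ (a + 1) * e (a + 1) * hs x g n)
        + x ^ (n + 1) * e (n + 1) * hs x g n + x ^ 0 * e 0 * hs x g n
      = ∑ a ∈ range (n + 1), (e (a + 1) * c1 a + e a * r a) := by
    rw [Finset.sum_add_distrib, Finset.sum_range_succ (fun a => e (a + 1) * c1 a) n,
        Finset.sum_range_succ' (fun a => e a * r a) n, c0, cn, hsum,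
        Finset.sum_add_distrib]
    ring
  rw [step1]
  -- Step 2 : termwise bound
  rw [Finset.sum_mul]
  refine Finset.sum_le_sum fun a ha => ?_
  have han : a ≤ n := by have := Finset.mem_range.1 ha; omega
  have hgn := hg (n - a)
  have hgn1 := hg (n - a + 1)
  have hs0 := sfun_nonneg hx hg hlc han
  have hsle := sfun_le hx hg han
  have k1 : e (a + 1) * c1 a ≤ D a * c1 a := by
    refine mul_le_mul_of_nonneg_right (hD1 a han) ?_
    simp only [hc1def]
    exact div_nonneg hs0 hgn.le
  have hrnn : 0 ≤ (x ^ a * g (n - a) * hs x g (n + 1) - sfun x g n a) / g (n - a + 1) :=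
    div_nonneg (by linarith) hgn1.le
  have eb : e a ≤ d a * g (n - a + 1) / g (n - a) :=
    (le_div_iff₀ hgn).2 (hed a han)
  have k2 : e a * r a ≤ d a * g (n - a + 1) / g (n - a) * r a := by
    refine mul_le_mul_of_nonneg_right eb ?_
    simp only [hrdef]
    exact hrnn
  have k2' : d a * g (n - a + 1) / g (n - a) * r a
      = d a * ((x ^ a * g (n - a) * hs x g (n + 1) - sfun x g n a) / g (n - a)) := by
    simp only [hrdef]
    field_simp
  have k3 : d a * ((x ^ a * g (n - a) * hs x g (n + 1) - sfun x g n a) / g (n - a))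
      ≤ D a * ((x ^ a * g (n - a) * hs x g (n + 1) - sfun x g n a) / g (n - a)) := by
    refine mul_le_mul_of_nonneg_right (hD2 a han) ?_
    exact div_nonneg (by linarith) hgn.le
  have kfin : D a * c1 a
        + D a * ((x ^ a * g (n - a) * hs x g (n + 1) - sfun x g n a) / g (n - a))
      = x ^ a * D a * hs x g (n + 1) := by
    simp only [hc1def]
    rw [← mul_add, ← add_div]
    rw [show sfun x g n a + (x ^ a * g (n - a) * hs x g (n + 1) - sfun x g n a)
        = g (n - a) * (x ^ a * hs x g (n + 1)) from by ring]
    rw [mul_div_cancel_left₀ _ (hg (n - a)).ne']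
    ring
  linarith [k1, k2, k2', k3, kfin]


lemma hs_lc (hx : 0 < x) (hg : ∀ j, 0 < g j)
    (hlc : ∀ j, g j * g (j + 2) ≤ g (j + 1) ^ 2) (n : ℕ) :
    hs x g n * hs x g (n + 2) ≤ hs x g (n + 1) ^ 2 := by
  have key : g (n + 2) * hs x g n ≤ g (n + 1) * hs x g (n + 1) := by
    have step1 : g (n + 2) * hs x g n ≤ g (n + 1) * M x g n (n + 1) := by
      rw [hs, M, M, Finset.mul_sum, Finset.mul_sum]
      refine Finset.sum_le_sum fun a ha => ?_
      have han : a ≤ n := by have := Finset.mem_range.1 ha; omega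
      have hr := R1 hg hlc (n - a) (n + 1) (by omega)
      rw [show n - a + 1 = n + 1 - a from by omega] at hr
      rw [show n + 1 + 1 = n + 2 from rfl] at hr
      calc g (n + 2) * (x ^ a * g (n - a)) = x ^ a * (g (n + 2) * g (n - a)) := by ring
        _ ≤ x ^ a * (g (n + 1) * g (n + 1 - a)) :=
            mul_le_mul_of_nonneg_left hr (pow_nonneg hx.le a)
        _ = g (n + 1) * (x ^ a * g (n + 1 - a)) := by ring
    have step2 := mul_le_mul_of_nonneg_left
      (M_le_hs hx hg (show n ≤ n + 1 by omega)) (hg (n + 1)).le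
    linarith
  have e1 := hs_succ (x := x) (g := g) n
  have e2 := hs_succ (x := x) (g := g) (n + 1)
  have key2 : g (n + 1) * hs x g (n + 1)
      = hs x g (n + 1) ^ 2 - x * hs x g n * hs x g (n + 1) := by
    have hge : g (n + 1) = hs x g (n + 1) - x * hs x g n := by linarith
    rw [hge]; ring
  rw [e2]
  nlinarith [key, key2]

end Key


section Comb
open Finset

/-- number of prime factors with multiplicity -/
def Om (n : ℕ) : ℕ := n.primeFactorsList.length

lemma Om_one : Om 1 = 0 := by simp [Om, Nat.primeFactorsList_one]

lemma Om_mul {a b : ℕ} (ha : a ≠ 0) (hb : b ≠ 0) : Om (a * b) = Om a + Om b := by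
  unfold Om
  rw [(Nat.perm_primeFactorsList_mul ha hb).length_eq, List.length_append]

lemma Om_prime {p : ℕ} (hp : p.Prime) : Om p = 1 := by
  simp [Om, Nat.primeFactorsList_prime hp]

lemma Om_eq_zero {n : ℕ} (hn : n ≠ 0) (h : Om n = 0) : n = 1 := by
  unfold Om at h
  rcases (Nat.primeFactorsList_eq_nil n).1 (List.length_eq_zero_iff.1 h) with h1 | h1
  · exact absurd h1 hn
  · exact h1

lemma Om_pow {q : ℕ} (hq : q.Prime) (a : ℕ) : Om (q ^ a) = a := by
  induction a with
  | zero => simpa using Om_one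
  | succ a ih =>
    rw [pow_succ, Om_mul (pow_ne_zero _ hq.pos.ne') hq.pos.ne', ih, Om_prime hq]

lemma Om_dvd_le {d n : ℕ} (hn : n ≠ 0) (h : d ∣ n) : Om d ≤ Om n := by
  obtain ⟨c, rfl⟩ := h
  have hd : d ≠ 0 := left_ne_zero_of_mul hn
  have hc : c ≠ 0 := right_ne_zero_of_mul hn
  rw [Om_mul hd hc]; omega

lemma Om_dvd_eq {d n : ℕ} (hn : n ≠ 0) (h : d ∣ n) (hOm : Om n ≤ Om d) : d = n := by
  obtain ⟨c, rfl⟩ := h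
  have hd : d ≠ 0 := left_ne_zero_of_mul hn
  have hc : c ≠ 0 := right_ne_zero_of_mul hn
  rw [Om_mul hd hc] at hOm
  have h0 : Om c = 0 := by omega
  rw [Om_eq_zero hc h0, mul_one]

variable {t : ℝ}

/-- the weight `n ^ (-t)` -/
noncomputable def ww (t : ℝ) (n : ℕ) : ℝ := (n : ℝ) ^ (-t)

lemma ww_pos {n : ℕ} (hn : 0 < n) : 0 < ww t n :=
  Real.rpow_pos_of_pos (by exact_mod_cast hn) _

lemma ww_nonneg (n : ℕ) : 0 ≤ ww t n := Real.rpow_nonneg (Nat.cast_nonneg n) _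

lemma ww_one : ww t 1 = 1 := by simp [ww]

lemma ww_mul (a b : ℕ) : ww t (a * b) = ww t a * ww t b := by
  unfold ww
  push_cast
  exact Real.mul_rpow (Nat.cast_nonneg a) (Nat.cast_nonneg b)

lemma ww_pow (q a : ℕ) : ww t (q ^ a) = ww t q ^ a := by
  induction a with
  | zero => simpa using ww_one
  | succ a ih => rw [pow_succ, ww_mul, ih, pow_succ]

lemma ww_lt_one (ht : 0 < t) {q : ℕ} (hq : 2 ≤ q) : ww t q < 1 := by
  refine Real.rpow_lt_one_of_one_lt_of_neg ?_ (by linarith)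
  exact_mod_cast hq

/-- the level sets of `ℕ(Q)` -/
def Lev (Q : Finset ℕ) : ℕ → Finset ℕ
  | 0 => {1}
  | j + 1 => (Q ×ˢ Lev Q j).image fun pm => pm.1 * pm.2

lemma mem_Lev {Q : Finset ℕ} (hQ : ∀ p ∈ Q, Nat.Prime p) :
    ∀ {j n : ℕ}, n ∈ Lev Q j ↔ (0 < n ∧ (∀ p, Nat.Prime p → p ∣ n → p ∈ Q) ∧ Om n = j) := by
  intro j
  induction j with
  | zero =>
    intro n
    simp only [Lev, Finset.mem_singleton]
    constructor
    · rintro rfl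
      exact ⟨one_pos, fun p hp hd => absurd (Nat.dvd_one.1 hd) hp.ne_one, Om_one⟩
    · rintro ⟨h1, _, h3⟩
      exact Om_eq_zero h1.ne' h3
  | succ j ih =>
    intro n
    simp only [Lev, Finset.mem_image, Finset.mem_product]
    constructor
    · rintro ⟨⟨p, m⟩, ⟨hp, hm⟩, rfl⟩
      obtain ⟨hm1, hm2, hm3⟩ := ih.1 hm
      have hpp := hQ p hp
      refine ⟨Nat.mul_pos hpp.pos hm1, ?_, ?_⟩
      · intro r hr hd
        rcases (Nat.Prime.dvd_mul hr).1 hd with h | h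
        · rwa [(Nat.prime_dvd_prime_iff_eq hr hpp).1 h]
        · exact hm2 r hr h
      · rw [Om_mul hpp.pos.ne' hm1.ne', Om_prime hpp, hm3, add_comm]
    · rintro ⟨h1, h2, h3⟩
      have hn1 : n ≠ 1 := by
        intro h
        rw [h, Om_one] at h3
        omega
      have hp := Nat.minFac_prime hn1
      have hdvd := Nat.minFac_dvd n
      have hmpos : 0 < n / n.minFac := Nat.div_pos (Nat.minFac_le h1) hp.pos
      have hmul : n.minFac * (n / n.minFac) = n := Nat.mul_div_cancel' hdvd
      have hOmm : Om (n / n.minFac) = j := by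
        have hOm := Om_mul (a := n.minFac) (b := n / n.minFac) hp.pos.ne' hmpos.ne'
        rw [hmul, h3, Om_prime hp] at hOm
        omega
      have hmm : n / n.minFac ∈ Lev Q j := by
        apply ih.2
        exact ⟨hmpos, fun r hr hrd => h2 r hr (hrd.trans (Nat.div_dvd_of_dvd hdvd)), hOmm⟩
      exact ⟨(n.minFac, n / n.minFac), ⟨h2 _ hp hdvd, hmm⟩, hmul⟩

/-- the level sums -/
noncomputable def hh (t : ℝ) (Q : Finset ℕ) (j : ℕ) : ℝ := ∑ n ∈ Lev Q j, ww t n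

lemma hh_zero (Q : Finset ℕ) : hh t Q 0 = 1 := by
  simp [hh, Lev, ww_one]

lemma hh_nonneg (Q : Finset ℕ) (j : ℕ) : 0 ≤ hh t Q j :=
  Finset.sum_nonneg fun n _ => ww_nonneg n

lemma hh_pos {Q : Finset ℕ} (hQ : ∀ p ∈ Q, Nat.Prime p) (hne : Q.Nonempty) (j : ℕ) :
    0 < hh t Q j := by
  obtain ⟨p, hp⟩ := hne
  have hpp := hQ p hp
  have hmem : p ^ j ∈ Lev Q j := by
    refine (mem_Lev hQ).2 ⟨pow_pos hpp.pos j, ?_, Om_pow hpp j⟩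
    intro r hr hrd
    rwa [(Nat.prime_dvd_prime_iff_eq hr hpp).1 (hr.dvd_of_dvd_pow hrd)]
  refine Finset.sum_pos' (fun n _ => ww_nonneg n) ⟨p ^ j, hmem, ww_pos (pow_pos hpp.pos j)⟩

lemma Lev_singleton (q : ℕ) : ∀ j, Lev {q} j = {q ^ j} := by
  intro j
  induction j with
  | zero => simp [Lev]
  | succ j ih =>
    rw [Lev, ih]
    rw [show ({q} ×ˢ ({q ^ j} : Finset ℕ)) = {(q, q ^ j)} from rfl]
    simp [pow_succ, mul_comm]

lemma hh_singleton (q : ℕ) (j : ℕ) : hh t {q} j = ww t q ^ j := by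
  rw [hh, Lev_singleton, Finset.sum_singleton, ww_pow]

lemma pow_mul_inj {q : ℕ} (hq : q.Prime) {a b u v : ℕ} (hu : ¬ q ∣ u) (hv : ¬ q ∣ v)
    (h : q ^ a * u = q ^ b * v) : a = b ∧ u = v := by
  have key : ∀ a b u v : ℕ, ¬ q ∣ u → ¬ q ∣ v → q ^ a * u = q ^ b * v → a ≤ b →
      a = b ∧ u = v := by
    intro a b u v hu hv h hab
    obtain ⟨c, rfl⟩ := Nat.exists_eq_add_of_le hab
    rw [pow_add, mul_assoc] at h
    have hq0 : 0 < q ^ a := pow_pos hq.pos a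
    have h2 : u = q ^ c * v := Nat.eq_of_mul_eq_mul_left hq0 h
    rcases Nat.eq_zero_or_pos c with rfl | hc
    · constructor
      · omega
      · simpa using h2
    · exfalso
      apply hu
      rw [h2]
      exact Dvd.dvd.mul_right (dvd_pow_self q hc.ne') v
  rcases le_total a b with hab | hab
  · exact key a b u v hu hv h hab
  · obtain ⟨h1, h2⟩ := key b a v u hv hu h.symm hab
    exact ⟨h1.symm, h2.symm⟩

lemma exists_decomp {Q' : Finset ℕ} {q : ℕ} (hq : q.Prime)
    (hQ' : ∀ p ∈ Q', Nat.Prime p) {N n : ℕ}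
    (hn : n ∈ Lev (insert q Q') N) :
    ∃ a m, a ≤ N ∧ m ∈ Lev Q' (N - a) ∧ n = q ^ a * m ∧ ¬ q ∣ m := by
  have hQ : ∀ p ∈ insert q Q', Nat.Prime p := by
    intro p hp
    rcases Finset.mem_insert.1 hp with rfl | hp
    · exact hq
    · exact hQ' p hp
  obtain ⟨hn1, hn2, hn3⟩ := (mem_Lev hQ).1 hn
  set a := n.factorization q with ha
  set m := n / q ^ a with hm
  have hmul : q ^ a * m = n := Nat.ordProj_mul_ordCompl_eq_self n q
  have hnd : ¬ q ∣ m := Nat.not_dvd_ordCompl hq hn1.ne'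
  have hm0 : m ≠ 0 := by
    intro h
    rw [h, mul_zero] at hmul
    omega
  have hOm : a + Om m = N := by
    rw [← hn3, ← hmul, Om_mul (pow_ne_zero _ hq.pos.ne') hm0, Om_pow hq]
  refine ⟨a, m, by omega, ?_, hmul.symm, hnd⟩
  apply (mem_Lev hQ').2
  refine ⟨Nat.pos_of_ne_zero hm0, ?_, by omega⟩
  intro r hr hrd
  have hr2 : r ∈ insert q Q' := by
    apply hn2 r hr
    exact hrd.trans ⟨q ^ a, by rw [← hmul]; ring⟩
  rcases Finset.mem_insert.1 hr2 with rfl | h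
  · exact absurd hrd hnd
  · exact h

/-- the pieces of a set according to the power of `q` dividing each element -/
def Ea (Q' : Finset ℕ) (q : ℕ) (E : Finset ℕ) (N a : ℕ) : Finset ℕ :=
  (Lev Q' (N - a)).filter fun m => q ^ a * m ∈ E

lemma Ea_not_dvd {Q' : Finset ℕ} {q : ℕ} (hq : q.Prime) (hq' : q ∉ Q')
    (hQ' : ∀ p ∈ Q', Nat.Prime p) {E : Finset ℕ} {N a m : ℕ}
    (hm : m ∈ Ea Q' q E N a) : ¬ q ∣ m := by
  have h1 := (Finset.mem_filter.1 hm).1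
  obtain ⟨_, h2, _⟩ := (mem_Lev hQ').1 h1
  intro hd
  exact hq' (h2 q hq hd)

lemma sum_decomp (f : ℕ → ℝ) {Q' : Finset ℕ} {q : ℕ} (hq : q.Prime) (hq' : q ∉ Q')
    (hQ' : ∀ p ∈ Q', Nat.Prime p) {N : ℕ} {E : Finset ℕ}
    (hE : E ⊆ Lev (insert q Q') N) :
    ∑ n ∈ E, f n = ∑ a ∈ range (N + 1), ∑ m ∈ Ea Q' q E N a, f (q ^ a * m) := by
  have hdisj : (↑(range (N + 1)) : Set ℕ).PairwiseDisjoint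
      (fun a => (Ea Q' q E N a).image fun m => q ^ a * m) := by
    intro a _ b _ hab
    simp only [Function.onFun, Finset.disjoint_left, Finset.mem_image]
    rintro n ⟨u, hu, rfl⟩ ⟨v, hv, hvv⟩
    exact hab (((pow_mul_inj hq (Ea_not_dvd hq hq' hQ' hv)
      (Ea_not_dvd hq hq' hQ' hu) hvv).1).symm)
  have hcover : E = (range (N + 1)).biUnion
      (fun a => (Ea Q' q E N a).image fun m => q ^ a * m) := by
    ext n
    simp only [Finset.mem_biUnion, Finset.mem_image, Finset.mem_range]
    constructor
    · intro hn
      obtain ⟨a, m, haN, hm, rfl, _⟩ := exists_decomp hq hQ' (hE hn)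
      exact ⟨a, by omega, m, Finset.mem_filter.2 ⟨hm, hn⟩, rfl⟩
    · rintro ⟨a, _, m, hm, rfl⟩
      exact (Finset.mem_filter.1 hm).2
  conv_lhs => rw [hcover]
  rw [Finset.sum_biUnion hdisj]
  refine Finset.sum_congr rfl fun a _ => ?_
  rw [Finset.sum_image]
  intro u _ v _ huv
  exact Nat.eq_of_mul_eq_mul_left (pow_pos hq.pos a) huv

lemma Ea_full {Q' : Finset ℕ} {q : ℕ} (hq : q.Prime) (hq' : q ∉ Q')
    (hQ' : ∀ p ∈ Q', Nat.Prime p) {N a : ℕ} (ha : a ≤ N) :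
    Ea Q' q (Lev (insert q Q') N) N a = Lev Q' (N - a) := by
  have hQ : ∀ p ∈ insert q Q', Nat.Prime p := by
    intro p hp
    rcases Finset.mem_insert.1 hp with rfl | hp
    · exact hq
    · exact hQ' p hp
  apply Finset.filter_true_of_mem
  intro m hm
  obtain ⟨h1, h2, h3⟩ := (mem_Lev hQ').1 hm
  apply (mem_Lev hQ).2
  refine ⟨Nat.mul_pos (pow_pos hq.pos a) h1, ?_, ?_⟩
  · intro r hr hrd
    rcases (Nat.Prime.dvd_mul hr).1 hrd with h | h
    · rw [(Nat.prime_dvd_prime_iff_eq hr hq).1 (hr.dvd_of_dvd_pow h)]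
      exact Finset.mem_insert_self q Q'
    · exact Finset.mem_insert_of_mem (h2 r hr h)
  · rw [Om_mul (pow_ne_zero _ hq.pos.ne') h1.ne', Om_pow hq, h3]
    omega

lemma hh_decomp {Q' : Finset ℕ} {q : ℕ} (hq : q.Prime) (hq' : q ∉ Q')
    (hQ' : ∀ p ∈ Q', Nat.Prime p) (N : ℕ) :
    hh t (insert q Q') N = ∑ a ∈ range (N + 1), ww t q ^ a * hh t Q' (N - a) := by
  rw [hh, sum_decomp (ww t) hq hq' hQ' (Finset.Subset.refl _)]
  refine Finset.sum_congr rfl fun a ha => ?_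
  rw [Ea_full hq hq' hQ' (by have := Finset.mem_range.1 ha; omega), hh, Finset.mul_sum]
  refine Finset.sum_congr rfl fun m _ => ?_
  rw [ww_mul, ww_pow]

lemma hh_eq_hs {Q' : Finset ℕ} {q : ℕ} (hq : q.Prime) (hq' : q ∉ Q')
    (hQ' : ∀ p ∈ Q', Nat.Prime p) (N : ℕ) :
    hh t (insert q Q') N = hs (ww t q) (hh t Q') N := by
  rw [hh_decomp hq hq' hQ' N]
  rfl

end Comb


section Comb2
open Finset
variable {t : ℝ}

lemma hh_lc : ∀ (Q : Finset ℕ), (∀ p ∈ Q, Nat.Prime p) → Q.Nonempty →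
    ∀ j, hh t Q j * hh t Q (j + 2) ≤ hh t Q (j + 1) ^ 2 := by
  intro Q
  induction Q using Finset.induction_on with
  | empty => intro _ h; exact absurd h (by simp)
  | @insert q Q' hq' ih =>
    intro hQ _ j
    have hqp : q.Prime := hQ q (Finset.mem_insert_self q Q')
    have hQ'p : ∀ p ∈ Q', Nat.Prime p := fun p hp => hQ p (Finset.mem_insert_of_mem hp)
    have hx : 0 < ww t q := ww_pos hqp.pos
    rcases Q'.eq_empty_or_nonempty with rfl | hQ'ne
    · rw [show insert q (∅ : Finset ℕ) = {q} from rfl]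
      rw [hh_singleton, hh_singleton, hh_singleton]
      exact le_of_eq (by ring)
    · have hgpos : ∀ i, 0 < hh t Q' i := fun i => hh_pos hQ'p hQ'ne i
      have hglc := ih hQ'p hQ'ne
      rw [hh_eq_hs hqp hq' hQ'p, hh_eq_hs hqp hq' hQ'p, hh_eq_hs hqp hq' hQ'p]
      exact hs_lc hx hgpos hglc j

/-- the shadow of `E` at level `j` : all divisors with `Om = j` -/
def shAt (j : ℕ) (E : Finset ℕ) : Finset ℕ :=
  E.biUnion fun m => m.divisors.filter fun d => Om d = j

lemma mem_shAt {j : ℕ} {E : Finset ℕ} {u : ℕ} :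
    u ∈ shAt j E ↔ ∃ m ∈ E, (u ∣ m ∧ m ≠ 0) ∧ Om u = j := by
  simp [shAt, Nat.mem_divisors]

lemma NMP : ∀ (Q : Finset ℕ), (∀ p ∈ Q, Nat.Prime p) → ∀ (n : ℕ) (E : Finset ℕ),
    E ⊆ Lev Q (n + 1) →
    (∑ m ∈ E, ww t m) * hh t Q n ≤ (∑ u ∈ shAt n E, ww t u) * hh t Q (n + 1) := by
  intro Q
  induction Q using Finset.induction_on with
  | empty =>
    intro _ n E hE
    have hL : Lev (∅ : Finset ℕ) (n + 1) = ∅ := by simp [Lev]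
    rw [hL] at hE
    rw [Finset.subset_empty.1 hE]
    simp [shAt]
  | @insert q Q' hq' ih =>
    intro hQ n E hE
    have hqp : q.Prime := hQ q (Finset.mem_insert_self q Q')
    have hQ'p : ∀ p ∈ Q', Nat.Prime p := fun p hp => hQ p (Finset.mem_insert_of_mem hp)
    have hx : 0 < ww t q := ww_pos hqp.pos
    rcases Q'.eq_empty_or_nonempty with rfl | hQ'ne
    · -- single prime
      rw [show (insert q (∅ : Finset ℕ)) = {q} from rfl] at hE ⊢
      rw [Lev_singleton q (n + 1)] at hE
      rcases Finset.subset_singleton_iff.1 hE with rfl | rfl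
      · simp [shAt]
      · have hqn : q ^ n ∈ shAt n {q ^ (n + 1)} := by
          rw [mem_shAt]
          exact ⟨q ^ (n + 1), Finset.mem_singleton_self _,
            ⟨pow_dvd_pow q (by omega), (pow_pos hqp.pos (n + 1)).ne'⟩, Om_pow hqp n⟩
        have hsum : ww t (q ^ n) ≤ ∑ u ∈ shAt n {q ^ (n + 1)}, ww t u :=
          Finset.single_le_sum (fun u _ => ww_nonneg u) hqn
        rw [Finset.sum_singleton]
        rw [hh_singleton, hh_singleton]
        calc ww t (q ^ (n + 1)) * ww t q ^ n = ww t (q ^ n) * ww t q ^ (n + 1) := by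
              rw [ww_pow, ww_pow]; ring
          _ ≤ (∑ u ∈ shAt n {q ^ (n + 1)}, ww t u) * ww t q ^ (n + 1) :=
              mul_le_mul_of_nonneg_right hsum (pow_nonneg hx.le _)
    · -- main case
      have hgpos : ∀ i, 0 < hh t Q' i := fun i => hh_pos hQ'p hQ'ne i
      have hglc := hh_lc (t := t) Q' hQ'p hQ'ne
      have he : ∀ a : ℕ, (0:ℝ) ≤ ∑ m ∈ Ea Q' q E (n + 1) a, ww t m :=
        fun a => Finset.sum_nonneg fun m _ => ww_nonneg m
      have hd : ∀ a : ℕ, (0:ℝ) ≤ ∑ u ∈ shAt (n - a) (Ea Q' q E (n + 1) a), ww t u :=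
        fun a => Finset.sum_nonneg fun m _ => ww_nonneg m
      have hed : ∀ a, a ≤ n →
          (∑ m ∈ Ea Q' q E (n + 1) a, ww t m) * hh t Q' (n - a)
            ≤ (∑ u ∈ shAt (n - a) (Ea Q' q E (n + 1) a), ww t u) * hh t Q' (n - a + 1) := by
        intro a han
        refine ih hQ'p (n - a) _ ?_
        intro m hm
        have h1 := (Finset.mem_filter.1 hm).1
        rwa [show n + 1 - a = n - a + 1 from by omega] at h1
      have hD1 : ∀ a, a ≤ n → (∑ m ∈ Ea Q' q E (n + 1) (a + 1), ww t m)
          ≤ ∑ u ∈ Ea Q' q E (n + 1) (a + 1) ∪ shAt (n - a) (Ea Q' q E (n + 1) a), ww t u :=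
        fun a _ => Finset.sum_le_sum_of_subset_of_nonneg Finset.subset_union_left
          (fun u _ _ => ww_nonneg u)
      have hD2 : ∀ a, a ≤ n → (∑ u ∈ shAt (n - a) (Ea Q' q E (n + 1) a), ww t u)
          ≤ ∑ u ∈ Ea Q' q E (n + 1) (a + 1) ∪ shAt (n - a) (Ea Q' q E (n + 1) a), ww t u :=
        fun a _ => Finset.sum_le_sum_of_subset_of_nonneg Finset.subset_union_right
          (fun u _ _ => ww_nonneg u)
      have key := KeyStep hx hgpos hglc n
        (fun a => ∑ m ∈ Ea Q' q E (n + 1) a, ww t m)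
        (fun a => ∑ u ∈ shAt (n - a) (Ea Q' q E (n + 1) a), ww t u)
        (fun a => ∑ u ∈ Ea Q' q E (n + 1) (a + 1) ∪ shAt (n - a) (Ea Q' q E (n + 1) a), ww t u)
        he hd hed hD1 hD2
      have hL : ∑ m ∈ E, ww t m
          = ∑ a ∈ range (n + 2), ww t q ^ a * ∑ m ∈ Ea Q' q E (n + 1) a, ww t m := by
        rw [sum_decomp (ww t) hqp hq' hQ'p hE]
        rw [show n + 1 + 1 = n + 2 from rfl]
        refine Finset.sum_congr rfl fun a _ => ?_
        rw [Finset.mul_sum]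
        refine Finset.sum_congr rfl fun m _ => ?_
        rw [ww_mul, ww_pow]
      -- the union pieces are not divisible by q
      have hnd : ∀ a (u : ℕ),
          u ∈ Ea Q' q E (n + 1) (a + 1) ∪ shAt (n - a) (Ea Q' q E (n + 1) a) → ¬ q ∣ u := by
        intro a u hu
        rcases Finset.mem_union.1 hu with hu | hu
        · exact Ea_not_dvd hqp hq' hQ'p hu
        · obtain ⟨m, hm, ⟨hdvd, hm0⟩, _⟩ := mem_shAt.1 hu
          intro hqu
          exact Ea_not_dvd hqp hq' hQ'p hm (hqu.trans hdvd)
      -- the translated pieces sit inside the shadow of E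
      have hsub2 : ∀ a, a < n + 1 →
          ∀ u ∈ Ea Q' q E (n + 1) (a + 1) ∪ shAt (n - a) (Ea Q' q E (n + 1) a),
            q ^ a * u ∈ shAt n E := by
        intro a ha u hu
        rcases Finset.mem_union.1 hu with hu | hu
        · have hfil := Finset.mem_filter.1 hu
          have hmem := hfil.2
          obtain ⟨hu1, _, hu3⟩ := (mem_Lev hQ'p).1 hfil.1
          rw [mem_shAt]
          refine ⟨q ^ (a + 1) * u, hmem, ⟨?_, ?_⟩, ?_⟩
          · exact mul_dvd_mul_right (pow_dvd_pow q (by omega)) u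
          · exact (Nat.mul_pos (pow_pos hqp.pos _) hu1).ne'
          · rw [Om_mul (pow_ne_zero _ hqp.pos.ne') hu1.ne', Om_pow hqp, hu3]
            omega
        · obtain ⟨m, hm, ⟨hdvd, hm0⟩, hOm⟩ := mem_shAt.1 hu
          have hmE : q ^ a * m ∈ E := (Finset.mem_filter.1 hm).2
          have hu0 : u ≠ 0 := by
            intro h
            rw [h] at hdvd
            exact hm0 (Nat.eq_zero_of_zero_dvd hdvd)
          rw [mem_shAt]
          refine ⟨q ^ a * m, hmE, ⟨mul_dvd_mul_left _ hdvd, ?_⟩, ?_⟩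
          · exact (Nat.mul_pos (pow_pos hqp.pos _) (Nat.pos_of_ne_zero hm0)).ne'
          · rw [Om_mul (pow_ne_zero _ hqp.pos.ne') hu0, Om_pow hqp, hOm]
            omega
      have hR : (∑ a ∈ range (n + 1), ww t q ^ a *
            ∑ u ∈ Ea Q' q E (n + 1) (a + 1) ∪ shAt (n - a) (Ea Q' q E (n + 1) a), ww t u)
          ≤ ∑ u ∈ shAt n E, ww t u := by
        have himg : ∀ a, ww t q ^ a *
            (∑ u ∈ Ea Q' q E (n + 1) (a + 1) ∪ shAt (n - a) (Ea Q' q E (n + 1) a), ww t u)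
            = ∑ u ∈ (Ea Q' q E (n + 1) (a + 1) ∪ shAt (n - a) (Ea Q' q E (n + 1) a)).image
                (fun m => q ^ a * m), ww t u := by
          intro a
          rw [Finset.sum_image
            (by intro u _ v _ huv; exact Nat.eq_of_mul_eq_mul_left (pow_pos hqp.pos a) huv)]
          rw [Finset.mul_sum]
          refine Finset.sum_congr rfl fun m _ => ?_
          rw [ww_mul, ww_pow]
        have hdisj : (↑(range (n + 1)) : Set ℕ).PairwiseDisjoint
            (fun a => (Ea Q' q E (n + 1) (a + 1) ∪ shAt (n - a) (Ea Q' q E (n + 1) a)).image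
              fun m => q ^ a * m) := by
          intro a _ b _ hab
          simp only [Function.onFun, Finset.disjoint_left, Finset.mem_image]
          rintro w ⟨u, hu, rfl⟩ ⟨v, hv, hvv⟩
          exact hab (((pow_mul_inj hqp (hnd b v hv) (hnd a u hu) hvv).1).symm)
        calc (∑ a ∈ range (n + 1), ww t q ^ a *
              ∑ u ∈ Ea Q' q E (n + 1) (a + 1) ∪ shAt (n - a) (Ea Q' q E (n + 1) a), ww t u)
            = ∑ a ∈ range (n + 1),
              ∑ u ∈ (Ea Q' q E (n + 1) (a + 1) ∪ shAt (n - a) (Ea Q' q E (n + 1) a)).image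
                (fun m => q ^ a * m), ww t u := Finset.sum_congr rfl fun a _ => himg a
          _ = ∑ u ∈ (range (n + 1)).biUnion
                (fun a => (Ea Q' q E (n + 1) (a + 1) ∪ shAt (n - a) (Ea Q' q E (n + 1) a)).image
                  (fun m => q ^ a * m)), ww t u := (Finset.sum_biUnion hdisj).symm
          _ ≤ ∑ u ∈ shAt n E, ww t u := by
              refine Finset.sum_le_sum_of_subset_of_nonneg ?_ fun u _ _ => ww_nonneg u
              intro w hw
              obtain ⟨a, ha, hw⟩ := Finset.mem_biUnion.1 hw
              obtain ⟨u, hu, rfl⟩ := Finset.mem_image.1 hw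
              exact hsub2 a (Finset.mem_range.1 ha) u hu
      rw [hh_eq_hs hqp hq' hQ'p n, hh_eq_hs hqp hq' hQ'p (n + 1), hL]
      calc (∑ a ∈ range (n + 2), ww t q ^ a * ∑ m ∈ Ea Q' q E (n + 1) a, ww t m)
            * hs (ww t q) (hh t Q') n
          ≤ (∑ a ∈ range (n + 1), ww t q ^ a *
              ∑ u ∈ Ea Q' q E (n + 1) (a + 1) ∪ shAt (n - a) (Ea Q' q E (n + 1) a), ww t u)
            * hs (ww t q) (hh t Q') (n + 1) := key
        _ ≤ (∑ u ∈ shAt n E, ww t u) * hs (ww t q) (hh t Q') (n + 1) :=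
            mul_le_mul_of_nonneg_right hR (hs_pos hx hgpos (n + 1)).le

end Comb2


section Mono
open Finset
variable {t : ℝ}

noncomputable def AQ (t : ℝ) (Q : Finset ℕ) : ℝ := ∑ p ∈ Q, ww t p
noncomputable def BQ (t : ℝ) (Q : Finset ℕ) : ℝ := ∑ p ∈ Q, (ww t p) ^ 2

lemma Lev_one {Q : Finset ℕ} : Lev Q 1 = Q := by
  ext n
  simp only [Lev, Finset.mem_image, Finset.mem_product, Finset.mem_singleton]
  constructor
  · rintro ⟨⟨p, m⟩, ⟨hp, rfl⟩, rfl⟩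
    simpa using hp
  · intro hn
    exact ⟨(n, 1), ⟨hn, rfl⟩, mul_one n⟩

lemma hh_one (Q : Finset ℕ) : hh t Q 1 = AQ t Q := by
  rw [hh, Lev_one, AQ]

lemma hh_two : ∀ (Q : Finset ℕ), (∀ p ∈ Q, Nat.Prime p) →
    2 * hh t Q 2 = AQ t Q ^ 2 + BQ t Q := by
  intro Q
  induction Q using Finset.induction_on with
  | empty =>
    intro _
    simp [hh, Lev, AQ, BQ]
  | @insert q Q' hq' ih =>
    intro hQ
    have hqp : q.Prime := hQ q (Finset.mem_insert_self q Q')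
    have hQ'p : ∀ p ∈ Q', Nat.Prime p := fun p hp => hQ p (Finset.mem_insert_of_mem hp)
    have hrec := hh_decomp (t := t) hqp hq' hQ'p 2
    rw [Finset.sum_range_succ, Finset.sum_range_succ, Finset.sum_range_succ,
      Finset.range_zero, Finset.sum_empty] at hrec
    norm_num at hrec
    rw [hh_zero, hh_one] at hrec
    rw [hrec]
    rw [show AQ t (insert q Q') = ww t q + AQ t Q' from by
        rw [AQ, AQ, Finset.sum_insert hq'],
      show BQ t (insert q Q') = ww t q ^ 2 + BQ t Q' from by
        rw [BQ, BQ, Finset.sum_insert hq']]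
    linear_combination ih hQ'p

lemma hmono (Q : Finset ℕ) (hQ : ∀ p ∈ Q, Nat.Prime p) (hQne : Q.Nonempty)
    (hC : AQ t Q ^ 2 + BQ t Q ≤ 2 * AQ t Q) :
    ∀ j, 1 ≤ j → hh t Q (j + 1) ≤ hh t Q j := by
  have hpos : ∀ i, 0 < hh t Q i := fun i => hh_pos hQ hQne i
  have h21 : hh t Q 2 ≤ hh t Q 1 := by
    have e1 := hh_one (t := t) Q
    have e2 := hh_two (t := t) Q hQ
    nlinarith [sq_nonneg (AQ t Q - 1)]
  intro j hj
  have hr := R1 (g := fun i => hh t Q i) hpos (fun i => hh_lc Q hQ hQne i) 1 j hj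
  rw [show (1:ℕ) + 1 = 2 from rfl] at hr
  nlinarith [hr, mul_le_mul_of_nonneg_left h21 (hh_nonneg (t := t) Q j), hpos 1, hpos j,
    hpos (j + 1)]

lemma ww_sq (p : ℕ) : ww (2 * t) p = (ww t p) ^ 2 := by
  unfold ww
  rw [show -(2 * t) = (-t) * (2 : ℕ) from by push_cast; ring]
  rw [Real.rpow_mul (Nat.cast_nonneg p), Real.rpow_natCast]

lemma cond_C (ht : 1 < t) {P : Set ℕ} (hP : ∀ p ∈ P, Nat.Prime p)
    (hineq : ∑' p : P, (p : ℝ) ^ (-t) ≤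
      1 + Real.sqrt (1 - ∑' p : P, (p : ℝ) ^ (-(2 * t))))
    (Q : Finset ℕ) (hQP : ∀ p ∈ Q, p ∈ P) (hQp : ∀ p ∈ Q, Nat.Prime p) :
    AQ t Q ^ 2 + BQ t Q ≤ 2 * AQ t Q := by
  have hsum1 : Summable (fun n : ℕ => ww t n) := by
    unfold ww
    exact Real.summable_nat_rpow.2 (by linarith)
  have hsum2 : Summable (fun n : ℕ => ww (2 * t) n) := by
    unfold ww
    exact Real.summable_nat_rpow.2 (by linarith)
  set α := ∑' p : P, ((p : ℕ) : ℝ) ^ (-t) with hα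
  set β := ∑' p : P, ((p : ℕ) : ℝ) ^ (-(2 * t)) with hβ
  have hαi : α = ∑' n : ℕ, Set.indicator P (ww t) n := by
    rw [hα, ← tsum_subtype P (ww t)]
    rfl
  have hβi : β = ∑' n : ℕ, Set.indicator P (ww (2 * t)) n := by
    rw [hβ, ← tsum_subtype P (ww (2 * t))]
    rfl
  have hβ0 : 0 ≤ β := by
    rw [hβi]
    exact tsum_nonneg fun n => Set.indicator_nonneg (fun m _ => ww_nonneg m) n
  have hA : AQ t Q ≤ α := by
    rw [hαi, AQ]
    have : ∀ p ∈ Q, ww t p = Set.indicator P (ww t) p := fun p hp =>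
      (Set.indicator_of_mem (hQP p hp) _).symm
    rw [Finset.sum_congr rfl this]
    exact Summable.sum_le_tsum Q (fun n _ => Set.indicator_nonneg (fun m _ => ww_nonneg m) n)
      (hsum1.indicator P)
  have hB : BQ t Q ≤ β := by
    rw [hβi, BQ]
    have : ∀ p ∈ Q, (ww t p) ^ 2 = Set.indicator P (ww (2 * t)) p := fun p hp => by
      rw [Set.indicator_of_mem (hQP p hp), ww_sq]
    rw [Finset.sum_congr rfl this]
    exact Summable.sum_le_tsum Q (fun n _ => Set.indicator_nonneg (fun m _ => ww_nonneg m) n)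
      (hsum2.indicator P)
  have hA0 : 0 ≤ AQ t Q := Finset.sum_nonneg fun p _ => ww_nonneg p
  have hBA : BQ t Q ≤ AQ t Q := by
    refine Finset.sum_le_sum fun p hp => ?_
    have h2 : 2 ≤ p := (hQp p hp).two_le
    have h0 : 0 ≤ ww t p := ww_nonneg p
    have h1 : ww t p < 1 := ww_lt_one (by linarith) h2
    nlinarith
  by_cases hA1 : AQ t Q ≤ 1
  · nlinarith
  · push_neg at hA1
    have hαgt : 1 < α := lt_of_lt_of_le hA1 hA
    have hs1 : α - 1 ≤ Real.sqrt (1 - β) := by linarith [hineq]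
    have hspos : 0 < Real.sqrt (1 - β) := lt_of_lt_of_le (by linarith) hs1
    have h1β : 0 < 1 - β := Real.sqrt_pos.1 hspos
    have hsq : (α - 1) ^ 2 ≤ 1 - β := by
      have := mul_self_le_mul_self (by linarith : (0:ℝ) ≤ α - 1) hs1
      rw [Real.mul_self_sqrt h1β.le] at this
      nlinarith
    have hαC : α ^ 2 + β ≤ 2 * α := by nlinarith
    have hα2 : α ≤ 2 := by
      have h2 : Real.sqrt (1 - β) ≤ Real.sqrt 1 := Real.sqrt_le_sqrt (by linarith)
      rw [Real.sqrt_one] at h2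
      linarith [hineq]
    nlinarith [mul_nonneg (by linarith : (0:ℝ) ≤ α - AQ t Q)
      (by linarith : (0:ℝ) ≤ α + AQ t Q - 2)]

end Mono


section Star
open Finset
variable {t : ℝ}

lemma NSet_dvd {P : Set ℕ} {u m : ℕ} (hm : m ∈ NSet P) (hd : u ∣ m) : u ∈ NSet P := by
  refine ⟨?_, fun r hr hru => hm.2 r hr (hru.trans hd)⟩
  rcases Nat.eq_zero_or_pos u with rfl | h
  · exact absurd (Nat.eq_zero_of_zero_dvd hd) hm.1.ne'
  · exact h

lemma star {P : Set ℕ}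
    (Hmono : ∀ Q : Finset ℕ, (∀ p ∈ Q, Nat.Prime p ∧ p ∈ P) → Q.Nonempty →
      ∀ j, 1 ≤ j → hh t Q (j + 1) ≤ hh t Q j)
    (k : ℕ) (hk : 1 ≤ k) :
    ∀ (J : ℕ) (F : Finset ℕ),
      (∀ m ∈ F, m ∈ NSet P ∧ k ≤ Om m ∧ Om m ≤ k + J) →
      (∀ a ∈ F, ∀ b ∈ F, a ∣ b → a = b) →
      ∑ m ∈ F, ww t m ≤ ∑ u ∈ shAt k F, ww t u := by
  intro J
  induction J with
  | zero =>
    intro F hF _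
    refine Finset.sum_le_sum_of_subset_of_nonneg ?_ fun u _ _ => ww_nonneg u
    intro m hm
    obtain ⟨hm1, hm2, hm3⟩ := hF m hm
    rw [mem_shAt]
    exact ⟨m, hm, ⟨dvd_refl m, hm1.1.ne'⟩, by omega⟩
  | succ J ih =>
    intro F hF hanti
    classical
    set Ftop := F.filter (fun m => Om m = k + J + 1) with hFtopdef
    set Flow := F.filter (fun m => ¬ (Om m = k + J + 1)) with hFlowdef
    have hFtopF : Ftop ⊆ F := Finset.filter_subset _ F
    have hFlowF : Flow ⊆ F := Finset.filter_subset _ F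
    rcases Ftop.eq_empty_or_nonempty with hempty | hne
    · refine ih F (fun m hm => ?_) hanti
      obtain ⟨h1, h2, h3⟩ := hF m hm
      refine ⟨h1, h2, ?_⟩
      have hne : ¬ (Om m = k + J + 1) := by
        intro h
        have : m ∈ Ftop := Finset.mem_filter.2 ⟨hm, h⟩
        rw [hempty] at this
        simp at this
      omega
    · -- primes supporting the top layer
      set QE := Ftop.biUnion Nat.primeFactors with hQEdef
      have hQEp : ∀ p ∈ QE, Nat.Prime p := by
        intro p hp
        obtain ⟨m, _, hpm⟩ := Finset.mem_biUnion.1 hp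
        exact Nat.prime_of_mem_primeFactors hpm
      have hQEP : ∀ p ∈ QE, Nat.Prime p ∧ p ∈ P := by
        intro p hp
        obtain ⟨m, hm, hpm⟩ := Finset.mem_biUnion.1 hp
        have hprime := Nat.prime_of_mem_primeFactors hpm
        have hdvd := Nat.dvd_of_mem_primeFactors hpm
        exact ⟨hprime, ((hF m (hFtopF hm)).1).2 p hprime hdvd⟩
      have hQEne : QE.Nonempty := by
        obtain ⟨m, hm⟩ := hne
        have hm1 := (hF m (hFtopF hm)).1.1
        have hOm : Om m = k + J + 1 := (Finset.mem_filter.1 hm).2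
        have hm2 : m ≠ 1 := by
          intro h
          rw [h, Om_one] at hOm
          omega
        exact ⟨m.minFac, Finset.mem_biUnion.2 ⟨m, hm,
          Nat.mem_primeFactors.2 ⟨Nat.minFac_prime hm2, Nat.minFac_dvd m, hm1.ne'⟩⟩⟩
      have hEL : Ftop ⊆ Lev QE (k + J + 1) := by
        intro m hm
        have h1 := (hF m (hFtopF hm)).1
        refine (mem_Lev hQEp).2 ⟨h1.1, ?_, (Finset.mem_filter.1 hm).2⟩
        intro r hr hrd
        exact Finset.mem_biUnion.2 ⟨m, hm, Nat.mem_primeFactors.2 ⟨hr, hrd, h1.1.ne'⟩⟩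
      have hnmp := NMP (t := t) QE hQEp (k + J) Ftop hEL
      have hmono' := Hmono QE hQEP hQEne (k + J) (by omega)
      have hshn : (0:ℝ) ≤ ∑ u ∈ shAt (k + J) Ftop, ww t u :=
        Finset.sum_nonneg fun u _ => ww_nonneg u
      have hEsh : ∑ m ∈ Ftop, ww t m ≤ ∑ u ∈ shAt (k + J) Ftop, ww t u := by
        have hpos := hh_pos (t := t) hQEp hQEne (k + J)
        nlinarith [hnmp, mul_le_mul_of_nonneg_left hmono' hshn]
      set Sh := shAt (k + J) Ftop with hShdef
      -- shadow elements
      have hShfacts : ∀ u ∈ Sh, (u ∈ NSet P ∧ Om u = k + J) ∧ ∃ m ∈ Ftop, u ∣ m := by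
        intro u hu
        obtain ⟨m, hm, ⟨hdvd, hm0⟩, hOm⟩ := mem_shAt.1 hu
        exact ⟨⟨NSet_dvd (hF m (hFtopF hm)).1 hdvd, hOm⟩, m, hm, hdvd⟩
      -- disjointness of Flow and Sh
      have hdisj : Disjoint Flow Sh := by
        rw [Finset.disjoint_left]
        intro u hu hu2
        obtain ⟨⟨_, hOmu⟩, m, hm, hdvd⟩ := hShfacts u hu2
        have hOmm : Om m = k + J + 1 := (Finset.mem_filter.1 hm).2
        have := hanti u (hFlowF hu) m (hFtopF hm) hdvd
        rw [this] at hOmu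
        omega
      have hsplit : ∑ m ∈ F, ww t m = ∑ m ∈ Ftop, ww t m + ∑ m ∈ Flow, ww t m := by
        rw [hFtopdef, hFlowdef]
        exact (Finset.sum_filter_add_sum_filter_not F _ _).symm
      -- the new family
      have hF' : ∀ m ∈ Flow ∪ Sh, m ∈ NSet P ∧ k ≤ Om m ∧ Om m ≤ k + J := by
        intro m hm
        rcases Finset.mem_union.1 hm with hm | hm
        · obtain ⟨h1, h2, h3⟩ := hF m (hFlowF hm)
          have h4 : ¬ (Om m = k + J + 1) := (Finset.mem_filter.1 hm).2
          exact ⟨h1, h2, by omega⟩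
        · obtain ⟨⟨h1, h2⟩, _⟩ := hShfacts m hm
          exact ⟨h1, by omega, by omega⟩
      have hanti' : ∀ a ∈ Flow ∪ Sh, ∀ b ∈ Flow ∪ Sh, a ∣ b → a = b := by
        intro a ha b hb hab
        rcases Finset.mem_union.1 ha with ha | ha <;> rcases Finset.mem_union.1 hb with hb | hb
        · exact hanti a (hFlowF ha) b (hFlowF hb) hab
        · -- a ∈ Flow, b ∈ Sh : impossible unless equal
          obtain ⟨⟨hb1, hb2⟩, m, hm, hdvd⟩ := hShfacts b hb
          have heq := hanti a (hFlowF ha) m (hFtopF hm) (hab.trans hdvd)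
          have hOmm : Om m = k + J + 1 := (Finset.mem_filter.1 hm).2
          have hOma : Om a ≤ k + J := by
            obtain ⟨_, _, h3⟩ := hF a (hFlowF ha)
            have h4 : ¬ (Om a = k + J + 1) := (Finset.mem_filter.1 ha).2
            omega
          rw [heq] at hOma
          omega
        · -- a ∈ Sh, b ∈ Flow
          obtain ⟨⟨ha1, ha2⟩, _⟩ := hShfacts a ha
          have hb1 := (hF b (hFlowF hb)).1
          have hOmb : Om b ≤ k + J := by
            obtain ⟨_, _, h3⟩ := hF b (hFlowF hb)
            have h4 : ¬ (Om b = k + J + 1) := (Finset.mem_filter.1 hb).2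
            omega
          exact Om_dvd_eq hb1.1.ne' hab (by omega)
        · obtain ⟨⟨ha1, ha2⟩, _⟩ := hShfacts a ha
          obtain ⟨⟨hb1, hb2⟩, _⟩ := hShfacts b hb
          exact Om_dvd_eq hb1.1.ne' hab (by omega)
      have hstar' := ih (Flow ∪ Sh) hF' hanti'
      have hsubD : shAt k (Flow ∪ Sh) ⊆ shAt k F := by
        intro u hu
        obtain ⟨w, hw, ⟨hdvd, hw0⟩, hOm⟩ := mem_shAt.1 hu
        rcases Finset.mem_union.1 hw with hw | hw
        · exact mem_shAt.2 ⟨w, hFlowF hw, ⟨hdvd, hw0⟩, hOm⟩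
        · obtain ⟨⟨hw1, _⟩, m, hm, hdvdm⟩ := hShfacts w hw
          exact mem_shAt.2 ⟨m, hFtopF hm, ⟨hdvd.trans hdvdm,
            ((hF m (hFtopF hm)).1.1).ne'⟩, hOm⟩
      calc ∑ m ∈ F, ww t m = ∑ m ∈ Ftop, ww t m + ∑ m ∈ Flow, ww t m := hsplit
        _ ≤ (∑ u ∈ Sh, ww t u) + ∑ m ∈ Flow, ww t m := by linarith [hEsh]
        _ = ∑ m ∈ Flow ∪ Sh, ww t m := by
            rw [Finset.sum_union hdisj]
            ring
        _ ≤ ∑ u ∈ shAt k (Flow ∪ Sh), ww t u := hstar'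
        _ ≤ ∑ u ∈ shAt k F, ww t u :=
            Finset.sum_le_sum_of_subset_of_nonneg hsubD fun u _ _ => ww_nonneg u

end Star

end BM

/-- **Theorem 6 (Banks–Martin).** Let `t > 1` and let `P` be a set of primes with
`∑_{p∈P} p^{-t} ≤ 1 + (1 - ∑_{p∈P} p^{-2t})^{1/2}`. Then for every `k ≥ 1` the set
`ℕ_k(P)` is `t`-best among primitive subsets of `ℕ_{≥k}(P)`. -/
theorem Nk_t_best (t : ℝ) (ht : 1 < t) (P : Set ℕ) (hP : ∀ p ∈ P, Nat.Prime p)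
    (hineq : ∑' p : P, (p : ℝ) ^ (-t) ≤
      1 + Real.sqrt (1 - ∑' p : P, (p : ℝ) ^ (-(2 * t))))
    (k : ℕ) (hk : 1 ≤ k)
    (S : Set ℕ) (hS : S ⊆ NgeSet P k) (hprim : Primitive S) :
    ∑' n : S, (n : ℝ) ^ (-t) ≤ ∑' n : NkSet P k, (n : ℝ) ^ (-t) := by
  classical
  have hwsum : Summable (fun n : ℕ => BM.ww t n) := by
    unfold BM.ww
    exact Real.summable_nat_rpow.2 (by linarith)
  have HmonoP : ∀ Q : Finset ℕ, (∀ p ∈ Q, Nat.Prime p ∧ p ∈ P) → Q.Nonempty →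
      ∀ j, 1 ≤ j → BM.hh t Q (j + 1) ≤ BM.hh t Q j := by
    intro Q hQ hne j hj
    exact BM.hmono Q (fun p hp => (hQ p hp).1) hne
      (BM.cond_C ht hP hineq Q (fun p hp => (hQ p hp).2) (fun p hp => (hQ p hp).1)) j hj
  have hL : ∑' n : S, ((n : ℕ) : ℝ) ^ (-t) = ∑' n : ℕ, Set.indicator S (BM.ww t) n :=
    tsum_subtype S (BM.ww t)
  have hR : ∑' n : NkSet P k, ((n : ℕ) : ℝ) ^ (-t)
      = ∑' n : ℕ, Set.indicator (NkSet P k) (BM.ww t) n := tsum_subtype _ (BM.ww t)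
  rw [hL, hR]
  refine Summable.tsum_le_of_sum_le (hwsum.indicator S) ?_
  intro F
  set F' := F.filter (fun n => n ∈ S) with hF'def
  have hFind : ∑ n ∈ F, Set.indicator S (BM.ww t) n = ∑ n ∈ F', BM.ww t n := by
    rw [hF'def, Finset.sum_filter]
    refine Finset.sum_congr rfl fun n _ => ?_
    rw [Set.indicator_apply]
  rw [hFind]
  have hF'S : ∀ m ∈ F', m ∈ S := fun m hm => (Finset.mem_filter.1 hm).2
  have hF'mem : ∀ m ∈ F', m ∈ NSet P ∧ k ≤ BM.Om m ∧ BM.Om m ≤ k + F'.sup BM.Om := by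
    intro m hm
    have h1 := hS (hF'S m hm)
    exact ⟨h1.1, h1.2, le_trans (Finset.le_sup hm) (by omega)⟩
  have hanti : ∀ a ∈ F', ∀ b ∈ F', a ∣ b → a = b := fun a ha b hb hab =>
    hprim.2.2 a (hF'S a ha) b (hF'S b hb) hab
  have hstar := BM.star (t := t) HmonoP k hk (F'.sup BM.Om) F' hF'mem hanti
  refine le_trans hstar ?_
  have hsub : ∀ u ∈ BM.shAt k F', u ∈ NkSet P k := by
    intro u hu
    obtain ⟨m, hm, ⟨hdvd, hm0⟩, hOm⟩ := BM.mem_shAt.1 hu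
    exact ⟨BM.NSet_dvd (hS (hF'S m hm)).1 hdvd, hOm⟩
  have hind : ∑ u ∈ BM.shAt k F', BM.ww t u
      = ∑ u ∈ BM.shAt k F', Set.indicator (NkSet P k) (BM.ww t) u := by
    refine Finset.sum_congr rfl fun u hu => ?_
    rw [Set.indicator_of_mem (hsub u hu)]
  rw [hind]
  exact Summable.sum_le_tsum _ (fun n _ => Set.indicator_nonneg (fun m _ => BM.ww_nonneg m) n)
    (hwsum.indicator (NkSet P k))
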